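/- arXiv:2411.19811 — 3 statements merged into one kernel-verified Lean document; each statement's English description precedes it below -/
import Mathlib

section
/- Let n ≥ 1 be an integer, let P(z) = 2z^n + 1, and let α ∈ ℂ. Then the inequality ∫₀^{2π} |e^{iθ}·P′(e^{iθ}) − α·P(e^{iθ})|² dθ ≤ |n − α|² · ∫₀^{2π} |P(e^{iθ})|² dθ holds if and only if Re(α) ≤ n/2. Equivalently, 4|n − α|² + |α|² ≤ 5|n − α|² if and only if Re(α) ≤ n/2. -/
open Polynomial Real intervalIntegral

lemma integral_cos_nmul (n : ℕ) (hn : 1 ≤ n) :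
    ∫ θ in (0:ℝ)..(2*π), Real.cos (n*θ) = 0 := by
  have hc : (n:ℝ) ≠ 0 := by positivity
  rw [intervalIntegral.integral_comp_mul_left Real.cos hc]
  have : (n:ℝ) * (2*π) = (2*n : ℕ) * π := by push_cast; ring
  simp only [integral_cos]
  have h := Real.sin_nat_mul_pi (2*n)
  push_cast at h
  simp
  right
  rw [show (n:ℝ)*(2*π) = 2*↑n*π by ring]
  exact h

lemma integral_sin_nmul (n : ℕ) (hn : 1 ≤ n) :
    ∫ θ in (0:ℝ)..(2*π), Real.sin (n*θ) = 0 := by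
  have hc : (n:ℝ) ≠ 0 := by positivity
  rw [intervalIntegral.integral_comp_mul_left Real.sin hc]
  have : (n:ℝ) * (2*π) = (2*n : ℕ) * π := by push_cast; ring
  simp only [integral_sin]
  have h := Real.cos_nat_mul_two_pi n
  simp [h]

lemma key (n : ℕ) (hn : 1 ≤ n) (c d : ℂ) :
    ∫ θ in (0:ℝ)..(2*π),
      ‖c * Complex.exp ((n:ℂ) * θ * Complex.I) + d‖ ^ (2:ℝ)
      = 2 * π * (‖c‖ ^ 2 + ‖d‖ ^ 2) := by
  have h1 : ∀ θ : ℝ,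
      ‖c * Complex.exp ((n:ℂ) * θ * Complex.I) + d‖ ^ (2:ℝ)
      = (Complex.normSq c + Complex.normSq d)
        + ((2 * (c * (starRingEnd ℂ) d).re) * Real.cos (n*θ)
           + (-(2 * (c * (starRingEnd ℂ) d).im)) * Real.sin (n*θ)) := by
    intro θ
    have he : ((n:ℂ) * θ * Complex.I) = ((n*θ : ℝ) : ℂ) * Complex.I := by push_cast; ring
    rw [show (2:ℝ) = ((2:ℕ):ℝ) by norm_num, Real.rpow_natCast, Complex.sq_norm,
      Complex.normSq_add, he]
    have habs : Complex.normSq (Complex.exp (((n*θ:ℝ):ℂ) * Complex.I)) = 1 := by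
      rw [← Complex.sq_norm, Complex.norm_exp_ofReal_mul_I]; norm_num
    rw [Complex.normSq_mul, habs, Complex.exp_mul_I]
    simp only [Complex.add_re, Complex.add_im, Complex.mul_re, Complex.mul_im,
      Complex.cos_ofReal_re, Complex.cos_ofReal_im, Complex.sin_ofReal_re, Complex.sin_ofReal_im,
      Complex.I_re, Complex.I_im]
    ring
  rw [intervalIntegral.integral_congr (g := fun θ => (Complex.normSq c + Complex.normSq d)
        + ((2 * (c * (starRingEnd ℂ) d).re) * Real.cos (n*θ)
           + (-(2 * (c * (starRingEnd ℂ) d).im)) * Real.sin (n*θ))) (fun θ _ => h1 θ)]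
  have hcos : IntervalIntegrable (fun θ : ℝ => Real.cos (n*θ)) MeasureTheory.volume 0 (2*π) :=
    (Real.continuous_cos.comp (continuous_const.mul continuous_id)).intervalIntegrable _ _
  have hsin : IntervalIntegrable (fun θ : ℝ => Real.sin (n*θ)) MeasureTheory.volume 0 (2*π) :=
    (Real.continuous_sin.comp (continuous_const.mul continuous_id)).intervalIntegrable _ _
  rw [intervalIntegral.integral_add (intervalIntegrable_const)
      ((hcos.const_mul _).add (hsin.const_mul _)),
    intervalIntegral.integral_add (hcos.const_mul _) (hsin.const_mul _),
    intervalIntegral.integral_const_mul, intervalIntegral.integral_const_mul,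
    integral_cos_nmul n hn, integral_sin_nmul n hn, intervalIntegral.integral_const]
  simp [Complex.sq_norm, smul_eq_mul]

theorem condition_on_alpha_sharp
    (n : ℕ) (hn : 1 ≤ n) (P : Polynomial ℂ) (hPdef : P = Polynomial.C 2 * Polynomial.X ^ n + 1)
    (α : ℂ) :
    ((∫ θ in (0:ℝ)..(2 * π),
        ‖Complex.exp (θ * Complex.I) *
            (Polynomial.derivative P).eval (Complex.exp (θ * Complex.I))
          - α * P.eval (Complex.exp (θ * Complex.I))‖ ^ (2:ℝ)
      ≤ ‖(n : ℂ) - α‖ ^ (2:ℝ) *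
        ∫ θ in (0:ℝ)..(2 * π),
          ‖P.eval (Complex.exp (θ * Complex.I))‖ ^ (2:ℝ))
        ↔ α.re ≤ (n : ℝ) / 2)
    ∧ ((4 * ‖(n : ℂ) - α‖ ^ 2 + ‖α‖ ^ 2
          ≤ 5 * ‖(n : ℂ) - α‖ ^ 2)
        ↔ α.re ≤ (n : ℝ) / 2) := by
  have hn' : (1:ℝ) ≤ n := by exact_mod_cast hn
  have halg : (4 * ‖(n : ℂ) - α‖ ^ 2 + ‖α‖ ^ 2
          ≤ 5 * ‖(n : ℂ) - α‖ ^ 2) ↔ α.re ≤ (n : ℝ) / 2 := by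
    rw [Complex.sq_norm, Complex.sq_norm, Complex.normSq_apply, Complex.normSq_apply,
      Complex.sub_re, Complex.sub_im, Complex.natCast_re, Complex.natCast_im]
    constructor
    · intro h; nlinarith
    · intro h; nlinarith
  refine ⟨?_, halg⟩
  subst hPdef
  have hz : ∀ θ : ℝ, Complex.exp ((θ:ℂ) * Complex.I) ^ n = Complex.exp ((n:ℂ) * θ * Complex.I) := by
    intro θ
    rw [← Complex.exp_nat_mul]
    ring_nf
  have hev : ∀ θ : ℝ, (Polynomial.C 2 * Polynomial.X ^ n + 1 : Polynomial ℂ).eval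
      (Complex.exp (θ * Complex.I)) = 2 * Complex.exp ((n:ℂ) * θ * Complex.I) + 1 := by
    intro θ
    simp [hz θ]
  have hev' : ∀ θ : ℝ, Complex.exp (θ * Complex.I) *
      (Polynomial.derivative (Polynomial.C 2 * Polynomial.X ^ n + 1 : Polynomial ℂ)).eval
        (Complex.exp (θ * Complex.I))
      - α * (Polynomial.C 2 * Polynomial.X ^ n + 1 : Polynomial ℂ).eval (Complex.exp (θ * Complex.I))
      = 2 * ((n:ℂ) - α) * Complex.exp ((n:ℂ) * θ * Complex.I) + (-α) := by
    intro θ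
    have hp : Complex.exp ((θ:ℂ) * Complex.I) * Complex.exp ((θ:ℂ) * Complex.I) ^ (n-1)
        = Complex.exp ((n:ℂ) * θ * Complex.I) := by
      rw [← pow_succ', Nat.sub_add_cancel hn, hz θ]
    rw [hev θ]
    simp only [Polynomial.derivative_add, Polynomial.derivative_one, Polynomial.derivative_C_mul,
      Polynomial.derivative_X_pow, Polynomial.eval_add, Polynomial.eval_mul, Polynomial.eval_C,
      Polynomial.eval_pow, Polynomial.eval_X, Polynomial.eval_natCast, add_zero]
    rw [show Complex.exp (↑θ * Complex.I) * (2 * ((n:ℂ) * Complex.exp (↑θ * Complex.I) ^ (n - 1)))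
        = 2 * (n:ℂ) * (Complex.exp ((θ:ℂ) * Complex.I) * Complex.exp ((θ:ℂ) * Complex.I) ^ (n-1))
        by ring, hp]
    ring
  have h1 : (∫ θ in (0:ℝ)..(2 * π),
      ‖Complex.exp (θ * Complex.I) *
          (Polynomial.derivative (Polynomial.C 2 * Polynomial.X ^ n + 1 : Polynomial ℂ)).eval
            (Complex.exp (θ * Complex.I))
        - α * (Polynomial.C 2 * Polynomial.X ^ n + 1 : Polynomial ℂ).eval
            (Complex.exp (θ * Complex.I))‖ ^ (2:ℝ))
      = 2 * π * (‖2 * ((n:ℂ) - α)‖ ^ 2 + ‖-α‖ ^ 2) := by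
    rw [← key n hn (2 * ((n:ℂ) - α)) (-α)]
    exact intervalIntegral.integral_congr (fun θ _ => by rw [hev' θ])
  have h2 : (∫ θ in (0:ℝ)..(2 * π),
      ‖(Polynomial.C 2 * Polynomial.X ^ n + 1 : Polynomial ℂ).eval
        (Complex.exp (θ * Complex.I))‖ ^ (2:ℝ))
      = 2 * π * (‖(2:ℂ)‖ ^ 2 + ‖(1:ℂ)‖ ^ 2) := by
    rw [← key n hn (2:ℂ) (1:ℂ)]
    exact intervalIntegral.integral_congr (fun θ _ => by rw [hev θ])
  rw [h1, h2]
  rw [show ‖(n:ℂ) - α‖ ^ (2:ℝ) = ‖(n:ℂ) - α‖ ^ (2:ℕ) by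
    rw [show (2:ℝ) = ((2:ℕ):ℝ) by norm_num, Real.rpow_natCast]]
  rw [← halg]
  have habs : ‖2 * ((n:ℂ) - α)‖ ^ 2 = 4 * ‖(n:ℂ) - α‖ ^ 2 := by
    rw [norm_mul]; simp; ring
  rw [habs]
  simp only [norm_neg, Complex.norm_two, norm_one]
  have hpi : (0:ℝ) < π := Real.pi_pos
  constructor
  · intro h; nlinarith
  · intro h; nlinarith
end

section
/- Let F be a polynomial of degree n with complex coefficients having all its zeros in the closed unit disk |z| ≤ 1, and let P be a polynomial of degree at most n such that |P(z)| ≤ |F(z)| for all |z| = 1. Then for every α ∈ ℂ with Re(α) ≤ n/2 and every z with |z| ≥ 1, |z·P′(z) − α·P(z)| ≤ |z·F′(z) − α·F(z)|. -/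
open Polynomial Filter

lemma half_lt_re_div {a z : ℂ} (ha : ‖a‖ ≤ 1) (hz : 1 < ‖z‖) :
    1/2 < (z / (z - a)).re := by
  have hN : 0 < Complex.normSq (z - a) := by
    rw [Complex.normSq_pos, sub_ne_zero]
    intro h; subst h; exact absurd ha (not_le.2 hz)
  have ha2 : Complex.normSq a ≤ 1 := by
    have h := Complex.sq_norm a
    nlinarith [norm_nonneg a]
  have hz2 : 1 < Complex.normSq z := by
    have := Complex.sq_norm z
    nlinarith [norm_nonneg z]
  rw [Complex.div_re, ← add_div, lt_div_iff₀ hN]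
  simp only [Complex.normSq_apply, Complex.sub_re, Complex.sub_im] at *
  nlinarith
lemma multiset_prod_eval_ne_zero {z : ℂ} (s : Multiset ℂ)
    (h : ∀ r ∈ s, ‖r‖ ≤ 1) (hz : 1 < ‖z‖) :
    ((s.map fun r => X - C r).prod).eval z ≠ 0 := by
  rw [eval_multiset_prod]
  refine Multiset.prod_ne_zero ?_
  intro h0
  rw [Multiset.mem_map] at h0
  obtain ⟨q, hq, hq0⟩ := h0
  rw [Multiset.mem_map] at hq
  obtain ⟨r, hr, rfl⟩ := hq
  simp only [eval_sub, eval_X, eval_C, sub_eq_zero] at hq0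
  subst hq0
  exact absurd (h _ hr) (not_le.2 hz)

lemma re_sum_ge {z : ℂ} (hz : 1 < ‖z‖) :
    ∀ (s : Multiset ℂ), (∀ r ∈ s, ‖r‖ ≤ 1) →
      (s.card : ℝ)/2 ≤ (z * (derivative ((s.map fun r => X - C r).prod)).eval z /
        ((s.map fun r => X - C r).prod).eval z).re := by
  refine Multiset.induction ?_ ?_
  · simp
  · intro a s ih hmem
    have ha : ‖a‖ ≤ 1 := hmem a (Multiset.mem_cons_self a s)
    have hs : ∀ r ∈ s, ‖r‖ ≤ 1 := fun r hr => hmem r (Multiset.mem_cons_of_mem hr)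
    have hQ := multiset_prod_eval_ne_zero s hs hz
    have hza : z - a ≠ 0 := by
      intro h; rw [sub_eq_zero] at h; subst h; exact absurd ha (not_le.2 hz)
    set Q := (s.map fun r => X - C r).prod with hQdef
    have hprod : ((a ::ₘ s).map fun r => X - C r).prod = (X - C a) * Q := by
      rw [Multiset.map_cons, Multiset.prod_cons]
    rw [hprod]
    have hder : derivative ((X - C a) * Q) = Q + (X - C a) * derivative Q := by
      rw [derivative_mul]; simp
    rw [hder]
    have key : z * (Q + (X - C a) * derivative Q).eval z / ((X - C a) * Q).eval z
        = z / (z - a) + z * (derivative Q).eval z / Q.eval z := by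
      simp only [eval_add, eval_mul, eval_sub, eval_X, eval_C]
      field_simp
    rw [key, Complex.add_re, Multiset.card_cons]
    push_cast
    have h1 := half_lt_re_div ha hz
    have h2 := ih hs
    linarith

lemma laguerre (Q : Polynomial ℂ) (m : ℕ) (hm : 1 ≤ m) (hdeg : Q.degree = m)
    (hroots : ∀ w, Q.eval w = 0 → ‖w‖ ≤ 1) (α : ℂ) (hα : α.re ≤ (m : ℝ)/2)
    (z : ℂ) (hz : 1 < ‖z‖) :
    z * (derivative Q).eval z - α * Q.eval z ≠ 0 := by
  have hQ0 : Q ≠ 0 := by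
    intro h; rw [h, degree_zero] at hdeg; exact absurd hdeg.symm (by simp)
  have hnat : Q.natDegree = m := natDegree_eq_of_degree_eq_some hdeg
  have hcard : Multiset.card Q.roots = Q.natDegree :=
    splits_iff_card_roots.mp (IsAlgClosed.splits Q)
  have hfact := C_leadingCoeff_mul_prod_multiset_X_sub_C (p := Q) hcard
  have hrb : ∀ r ∈ Q.roots, ‖r‖ ≤ 1 := by
    intro r hr
    exact hroots r ((mem_roots hQ0).mp hr)
  set M := (Q.roots.map fun r => X - C r).prod with hM
  have hMz : M.eval z ≠ 0 := multiset_prod_eval_ne_zero _ hrb hz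
  -- strict bound on Re(z M'/M)
  have hne : Q.roots ≠ 0 := by
    intro h
    rw [h, Multiset.card_zero] at hcard
    omega
  obtain ⟨a, ha⟩ := Multiset.exists_mem_of_ne_zero hne
  obtain ⟨s, hscons⟩ := Multiset.exists_cons_of_mem ha
  have haabs : ‖a‖ ≤ 1 := hrb a ha
  have hsabs : ∀ r ∈ s, ‖r‖ ≤ 1 := fun r hr =>
    hrb r (hscons ▸ Multiset.mem_cons_of_mem hr)
  have hSz : ((s.map fun r => X - C r).prod).eval z ≠ 0 := multiset_prod_eval_ne_zero _ hsabs hz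
  have hza : z - a ≠ 0 := by
    intro h; rw [sub_eq_zero] at h; subst h; exact absurd haabs (not_le.2 hz)
  have hstrict : (m : ℝ)/2 < (z * (derivative M).eval z / M.eval z).re := by
    set S := (s.map fun r => X - C r).prod with hS
    have hprod : M = (X - C a) * S := by rw [hM, hscons, Multiset.map_cons, Multiset.prod_cons]
    have key : z * (derivative M).eval z / M.eval z
        = z / (z - a) + z * (derivative S).eval z / S.eval z := by
      rw [hprod, derivative_mul]
      simp only [eval_add, eval_mul, eval_sub, eval_X, eval_C, derivative_sub, derivative_X,
        derivative_C, sub_zero, one_mul]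
      field_simp
    rw [key, Complex.add_re]
    have h1 := half_lt_re_div haabs hz
    have h2 := re_sum_ge hz s hsabs
    have hcs : (Multiset.card s : ℝ) = (m : ℝ) - 1 := by
      have : Multiset.card Q.roots = m := by rw [hcard, hnat]
      rw [hscons, Multiset.card_cons] at this
      have : Multiset.card s = m - 1 := by omega
      rw [this]
      have : (1:ℕ) ≤ m := hm
      push_cast [Nat.cast_sub hm]
      ring
    rw [hcs] at h2
    linarith
  have hMne : z * (derivative M).eval z - α * M.eval z ≠ 0 := by
    intro h
    have : z * (derivative M).eval z / M.eval z = α := by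
      field_simp
      linear_combination h
    rw [this] at hstrict
    linarith
  have hc : Q.leadingCoeff ≠ 0 := leadingCoeff_ne_zero.mpr hQ0
  have hQeq : z * (derivative Q).eval z - α * Q.eval z
      = Q.leadingCoeff * (z * (derivative M).eval z - α * M.eval z) := by
    conv_lhs => rw [← hfact]
    rw [derivative_mul, derivative_C]
    simp only [eval_add, eval_mul, eval_C, zero_mul, zero_add]
    ring
  rw [hQeq]
  exact mul_ne_zero hc hMne


lemma eval_reflect' (n : ℕ) (Q : Polynomial ℂ) (hQ : Q.natDegree ≤ n) (z : ℂ) (hz : z ≠ 0) :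
    (reflect n Q).eval z = z^n * Q.eval z⁻¹ := by
  have hzi : z⁻¹ ≠ 0 := inv_ne_zero hz
  letI : Invertible (z⁻¹) := invertibleOfNonzero hzi
  have h := eval₂_reflect_mul_pow (RingHom.id ℂ) (z⁻¹) n Q hQ
  have hinv : (⅟ (z⁻¹) : ℂ) = z := by
    rw [invOf_eq_inv, inv_inv]
  rw [hinv] at h
  simp only [eval₂_eq_eval_map, Polynomial.map_id] at h
  rw [← h, inv_pow]
  field_simp

lemma exp_ne_one_eventually : ∀ᶠ t : ℝ in nhdsWithin (0:ℝ) (Set.Ioi (0:ℝ)),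
    Complex.exp (t * Complex.I) ≠ 1 := by
  filter_upwards [Ioo_mem_nhdsGT_of_mem (Set.mem_Ico.mpr ⟨le_refl (0:ℝ), zero_lt_one⟩)]
    with t ht h1
  rw [Complex.exp_eq_one_iff] at h1
  obtain ⟨k, hk⟩ := h1
  have : (t : ℂ) = (k : ℂ) * (2 * Real.pi) := by
    apply mul_right_cancel₀ Complex.I_ne_zero
    rw [hk]; ring
  have ht' : t = (k : ℝ) * (2 * Real.pi) := by
    exact_mod_cast this
  rcases lt_trichotomy k 0 with hk0 | hk0 | hk0
  · have : (k:ℝ) ≤ -1 := by exact_mod_cast Int.le_sub_one_of_lt hk0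
    nlinarith [Real.pi_gt_three, ht.1]
  · simp [hk0] at ht'; linarith [ht.1, ht']
  · have : (1:ℝ) ≤ (k:ℝ) := by exact_mod_cast hk0
    nlinarith [Real.pi_gt_three, ht.2]

lemma tendsto_circle_pt (ζ : ℂ) : Filter.Tendsto (fun t : ℝ => ζ * Complex.exp (t * Complex.I))
    (nhdsWithin (0:ℝ) (Set.Ioi (0:ℝ))) (nhds ζ) := by
  have hc : Continuous fun t : ℝ => ζ * Complex.exp (t * Complex.I) := by
    continuity
  have := hc.tendsto 0
  simp only [Complex.ofReal_zero, zero_mul, Complex.exp_zero, mul_one] at this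
  exact this.mono_left nhdsWithin_le_nhds

lemma rootMult_le_of_circle_le (p f : Polynomial ℂ) (hp0 : p ≠ 0)
    (hcirc : ∀ z : ℂ, ‖z‖ = 1 → ‖p.eval z‖ ≤ ‖f.eval z‖)
    (ζ : ℂ) (hζ : ‖ζ‖ = 1) :
    rootMultiplicity ζ f ≤ rootMultiplicity ζ p := by
  by_contra hjk
  push_neg at hjk
  set j := rootMultiplicity ζ p with hj
  set k := rootMultiplicity ζ f with hk
  set p₁ := p /ₘ (X - C ζ)^j with hp₁def
  set f₁ := f /ₘ (X - C ζ)^k with hf₁def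
  have hpfac : (X - C ζ)^j * p₁ = p := pow_mul_divByMonic_rootMultiplicity_eq p ζ
  have hffac : (X - C ζ)^k * f₁ = f := pow_mul_divByMonic_rootMultiplicity_eq f ζ
  have hp₁ : p₁.eval ζ ≠ 0 := eval_divByMonic_pow_rootMultiplicity_ne_zero ζ hp0
  have hζ0 : ζ ≠ 0 := by
    intro h; rw [h] at hζ; simp at hζ
  have hev : ∀ᶠ t : ℝ in nhdsWithin (0:ℝ) (Set.Ioi (0:ℝ)),
      ‖p₁.eval (ζ * Complex.exp (t * Complex.I))‖
        ≤ ‖(ζ * Complex.exp (t * Complex.I)) - ζ‖^(k - j) *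
          ‖f₁.eval (ζ * Complex.exp (t * Complex.I))‖ := by
    filter_upwards [exp_ne_one_eventually] with t ht
    set z := ζ * Complex.exp (t * Complex.I) with hzdef
    have hzabs : ‖z‖ = 1 := by
      rw [hzdef, norm_mul, hζ, Complex.norm_exp_ofReal_mul_I, one_mul]
    have hzζ : z - ζ ≠ 0 := by
      rw [sub_ne_zero, hzdef]
      intro h
      apply ht
      field_simp at h
      exact h
    have hle := hcirc z hzabs
    rw [← hpfac, ← hffac] at hle
    simp only [eval_mul, eval_pow, eval_sub, eval_X, eval_C, norm_mul, norm_pow] at hle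
    have habspos : 0 < ‖z - ζ‖ := by
      simpa [norm_pos_iff] using hzζ
    have hkeq : k = j + (k - j) := by omega
    rw [hkeq, pow_add, mul_assoc] at hle
    exact le_of_mul_le_mul_left hle (pow_pos habspos j)
  have hcp : Continuous fun w : ℂ => ‖p₁.eval w‖ :=
    continuous_norm.comp p₁.continuous
  have h1 : Tendsto (fun t : ℝ => ‖p₁.eval (ζ * Complex.exp (t * Complex.I))‖)
      (nhdsWithin (0:ℝ) (Set.Ioi (0:ℝ))) (nhds (‖p₁.eval ζ‖)) :=
    (hcp.tendsto ζ).comp (tendsto_circle_pt ζ)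
  have hcg : Continuous fun w : ℂ => ‖w - ζ‖^(k - j) * ‖f₁.eval w‖ := by
    exact ((continuous_norm.comp (continuous_id.sub continuous_const)).pow _).mul
      (continuous_norm.comp f₁.continuous)
  have h2 : Tendsto (fun t : ℝ => ‖(ζ * Complex.exp (t * Complex.I)) - ζ‖^(k - j) *
      ‖f₁.eval (ζ * Complex.exp (t * Complex.I))‖)
      (nhdsWithin (0:ℝ) (Set.Ioi (0:ℝ))) (nhds 0) := by
    have := (hcg.tendsto ζ).comp (tendsto_circle_pt ζ)
    have h0 : ‖ζ - ζ‖^(k - j) * ‖f₁.eval ζ‖ = 0 := by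
      have : k - j ≠ 0 := by omega
      simp [this, zero_pow]
    rw [h0] at this
    exact this
  have hfin := le_of_tendsto_of_tendsto h1 h2 hev
  have : ‖p₁.eval ζ‖ = 0 := le_antisymm hfin (norm_nonneg _)
  exact hp₁ (norm_eq_zero.mp this)


lemma disk_ineq (n : ℕ) (F P : Polynomial ℂ) (hF : F.degree = n) (hP : P.degree ≤ n)
    (hFzeros : ∀ z : ℂ, F.eval z = 0 → ‖z‖ ≤ 1)
    (hPF : ∀ z : ℂ, ‖z‖ = 1 → ‖P.eval z‖ ≤ ‖F.eval z‖) :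
    ∀ z : ℂ, ‖z‖ ≤ 1 →
      ‖(reflect n P).eval z‖ ≤ ‖(reflect n F).eval z‖ := by
  classical
  rcases eq_or_ne P 0 with rfl | hP0
  · intro z _; simp [norm_nonneg]
  set p := reflect n P with hpdef
  set f := reflect n F with hfdef
  have hFnat : F.natDegree = n := natDegree_eq_of_degree_eq_some hF
  have hPnat : P.natDegree ≤ n := natDegree_le_iff_degree_le.mpr hP
  have hFne : F ≠ 0 := fun h => by rw [h, degree_zero] at hF; exact absurd hF.symm (by simp)
  -- f has no zeros in the open disk
  have hA : ∀ z : ℂ, ‖z‖ < 1 → f.eval z ≠ 0 := by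
    intro z hz
    rcases eq_or_ne z 0 with rfl | hz0
    · rw [hfdef, ← coeff_zero_eq_eval_zero, coeff_reflect, revAt_le (Nat.zero_le n), Nat.sub_zero]
      rw [← hFnat]
      exact mt leadingCoeff_eq_zero.mp hFne
    · rw [hfdef, eval_reflect' n F hFnat.le z hz0]
      refine mul_ne_zero (pow_ne_zero _ hz0) ?_
      intro h0
      have := hFzeros _ h0
      rw [norm_inv] at this
      rw [inv_le_one_iff₀] at this
      rcases this with h | h
      · exact hz0 (norm_eq_zero.mp (le_antisymm h (norm_nonneg _)))
      · linarith
  have hfne : f ≠ 0 := fun h => hA 0 (by simp) (by rw [h]; simp)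
  have hp0 : p ≠ 0 := by rw [hpdef, Ne, reflect_eq_zero_iff]; exact hP0
  -- circle inequality for reflected polynomials
  have hB : ∀ z : ℂ, ‖z‖ = 1 → ‖p.eval z‖ ≤ ‖f.eval z‖ := by
    intro z hz
    have hz0 : z ≠ 0 := by intro h; rw [h] at hz; simp at hz
    rw [hpdef, hfdef, eval_reflect' n P hPnat z hz0, eval_reflect' n F hFnat.le z hz0,
      norm_mul, norm_mul]
    refine mul_le_mul_of_nonneg_left ?_ (norm_nonneg _)
    exact hPF _ (by rw [norm_inv, hz, inv_one])
  set m := f.roots.filter (fun r => ‖r‖ = 1) with hmdef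
  set w := (m.map fun r => X - C r).prod with hwdef
  have hwf : w ∣ f :=
    dvd_trans (Multiset.prod_dvd_prod_of_le (Multiset.map_le_map (Multiset.filter_le _ _)))
      f.prod_multiset_X_sub_C_dvd
  have hmlep : m ≤ p.roots := by
    rw [Multiset.le_iff_count]
    intro r
    rw [hmdef, Multiset.count_filter]
    split_ifs with hr1
    · rw [count_roots, count_roots]
      exact rootMult_le_of_circle_le p f hp0 hB r hr1
    · exact Nat.zero_le _
  have hwp : w ∣ p :=
    dvd_trans (Multiset.prod_dvd_prod_of_le (Multiset.map_le_map hmlep))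
      p.prod_multiset_X_sub_C_dvd
  obtain ⟨f₁, hf₁⟩ := hwf
  obtain ⟨p₂, hp₂⟩ := hwp
  have hwmonic : w.Monic := monic_multiset_prod_of_monic _ _ (fun r _ => monic_X_sub_C r)
  have hw0 : w ≠ 0 := hwmonic.ne_zero
  have hf₁0 : f₁ ≠ 0 := by
    rintro rfl
    rw [mul_zero] at hf₁
    exact hfne hf₁
  have hrootsw : w.roots = m := roots_multiset_prod_X_sub_C m
  -- f₁ has no zeros on the closed disk
  have hf₁ne : ∀ ζ : ℂ, ‖ζ‖ ≤ 1 → f₁.eval ζ ≠ 0 := by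
    intro ζ hζ hev0
    have hfval : f.eval ζ = 0 := by rw [hf₁, eval_mul, hev0, mul_zero]
    have hζ1 : ‖ζ‖ = 1 := le_antisymm hζ (not_lt.mp (fun hlt => hA ζ hlt hfval))
    have hζroot : ζ ∈ f₁.roots := (mem_roots hf₁0).mpr hev0
    have hcount : Multiset.count ζ f.roots
        = Multiset.count ζ w.roots + Multiset.count ζ f₁.roots := by
      conv_lhs => rw [hf₁]
      rw [roots_mul (hf₁ ▸ hfne), Multiset.count_add]
    rw [hrootsw, hmdef, Multiset.count_filter, if_pos hζ1] at hcount
    have := Multiset.count_pos.mpr hζroot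
    omega
  -- circle inequality for quotients
  have hcirc2 : ∀ ζ : ℂ, ‖ζ‖ = 1 →
      ‖p₂.eval ζ‖ ≤ ‖f₁.eval ζ‖ := by
    intro ζ hζ
    have hζ0 : ζ ≠ 0 := by intro h; rw [h] at hζ; simp at hζ
    have hevw : ∀ᶠ t : ℝ in nhdsWithin (0:ℝ) (Set.Ioi (0:ℝ)),
        w.eval (ζ * Complex.exp (t * Complex.I)) ≠ 0 := by
      have hall : ∀ r ∈ m.toFinset, ∀ᶠ t : ℝ in nhdsWithin (0:ℝ) (Set.Ioi (0:ℝ)),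
          ζ * Complex.exp (t * Complex.I) ≠ r := by
        intro r _
        rcases eq_or_ne r ζ with rfl | hrζ
        · filter_upwards [exp_ne_one_eventually] with t ht h
          apply ht
          field_simp at h
          exact h
        · exact (tendsto_circle_pt ζ).eventually (eventually_ne_nhds (Ne.symm hrζ))
      have := (Filter.eventually_all_finset m.toFinset).mpr hall
      filter_upwards [this] with t ht hev0
      have : ζ * Complex.exp (t * Complex.I) ∈ w.roots := (mem_roots hw0).mpr hev0
      rw [hrootsw] at this
      exact ht _ (Multiset.mem_toFinset.mpr this) rfl
    have hev : ∀ᶠ t : ℝ in nhdsWithin (0:ℝ) (Set.Ioi (0:ℝ)),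
        ‖p₂.eval (ζ * Complex.exp (t * Complex.I))‖
          ≤ ‖f₁.eval (ζ * Complex.exp (t * Complex.I))‖ := by
      filter_upwards [hevw] with t hwt
      set z := ζ * Complex.exp (t * Complex.I) with hzdef
      have hzabs : ‖z‖ = 1 := by
        rw [hzdef, norm_mul, hζ, Complex.norm_exp_ofReal_mul_I, one_mul]
      have hle := hB z hzabs
      rw [hp₂, hf₁, eval_mul, eval_mul, norm_mul, norm_mul] at hle
      have hpos : 0 < ‖w.eval z‖ := by simpa [norm_pos_iff] using hwt
      exact le_of_mul_le_mul_left hle hpos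
    have h1 : Tendsto (fun t : ℝ => ‖p₂.eval (ζ * Complex.exp (t * Complex.I))‖)
        (nhdsWithin (0:ℝ) (Set.Ioi (0:ℝ))) (nhds (‖p₂.eval ζ‖)) :=
      ((continuous_norm.comp p₂.continuous).tendsto ζ).comp (tendsto_circle_pt ζ)
    have h2 : Tendsto (fun t : ℝ => ‖f₁.eval (ζ * Complex.exp (t * Complex.I))‖)
        (nhdsWithin (0:ℝ) (Set.Ioi (0:ℝ))) (nhds (‖f₁.eval ζ‖)) :=
      ((continuous_norm.comp f₁.continuous).tendsto ζ).comp (tendsto_circle_pt ζ)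
    exact le_of_tendsto_of_tendsto h1 h2 hev
  -- maximum modulus principle
  have key : ∀ z ∈ Metric.closedBall (0:ℂ) 1, ‖p₂.eval z / f₁.eval z‖ ≤ 1 := by
    intro z hzmem
    have hd : DiffContOnCl ℂ (fun z => p₂.eval z / f₁.eval z) (Metric.ball (0:ℂ) 1) := by
      constructor
      · intro x hx
        have hx1 : ‖x‖ ≤ 1 := by
          rw [Metric.mem_ball, dist_zero_right] at hx
          exact hx.le
        exact ((p₂.differentiableAt.div f₁.differentiableAt (hf₁ne x hx1))).differentiableWithinAt
      · rw [closure_ball (0:ℂ) one_ne_zero]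
        refine ContinuousOn.div p₂.continuous.continuousOn f₁.continuous.continuousOn ?_
        intro x hx
        rw [Metric.mem_closedBall, dist_zero_right] at hx
        exact hf₁ne x hx
    refine Complex.norm_le_of_forall_mem_frontier_norm_le Metric.isBounded_ball hd ?_ ?_
    · intro x hx
      rw [frontier_ball (0:ℂ) one_ne_zero, mem_sphere_iff_norm, sub_zero] at hx
      rw [norm_div, div_le_one
        (by simpa [norm_pos_iff] using hf₁ne x hx.le)]
      exact hcirc2 x hx
    · rw [closure_ball (0:ℂ) one_ne_zero]
      exact hzmem
  intro z hz
  have hzmem : z ∈ Metric.closedBall (0:ℂ) 1 := by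
    rw [Metric.mem_closedBall, dist_zero_right]
    exact hz
  have hkey := key z hzmem
  rw [norm_div,
    div_le_one (by simpa [norm_pos_iff] using hf₁ne z hz)] at hkey
  calc ‖p.eval z‖ = ‖w.eval z‖ * ‖p₂.eval z‖ := by
        rw [hp₂, eval_mul, norm_mul]
    _ ≤ ‖w.eval z‖ * ‖f₁.eval z‖ :=
        mul_le_mul_of_nonneg_left hkey (norm_nonneg _)
    _ = ‖f.eval z‖ := by rw [hf₁, eval_mul, norm_mul]


theorem comparison_first_order
    (n : ℕ) (F P : Polynomial ℂ) (hF : F.degree = n) (hP : P.degree ≤ n)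
    (hFzeros : ∀ z : ℂ, F.eval z = 0 → ‖z‖ ≤ 1)
    (hPF : ∀ z : ℂ, ‖z‖ = 1 → ‖P.eval z‖ ≤ ‖F.eval z‖)
    (α : ℂ) (hα : α.re ≤ (n : ℝ) / 2) :
    ∀ z : ℂ, 1 ≤ ‖z‖ →
      ‖z * (Polynomial.derivative P).eval z - α * P.eval z‖
        ≤ ‖z * (Polynomial.derivative F).eval z - α * F.eval z‖ := by
  rcases Nat.eq_zero_or_pos n with rfl | hn
  · -- degenerate constant case
    have hPc : P = C (P.coeff 0) := eq_C_of_degree_le_zero (by exact_mod_cast hP)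
    have hFc : F = C (F.coeff 0) := eq_C_of_degree_le_zero (by exact_mod_cast hF.le)
    have hcc : ‖P.coeff 0‖ ≤ ‖F.coeff 0‖ := by
      have := hPF 1 (by simp)
      rwa [hPc, hFc, eval_C, eval_C] at this
    intro z _
    rw [hPc, hFc]
    simp only [derivative_C, eval_zero, mul_zero, zero_sub, eval_C, norm_neg, norm_mul]
    exact mul_le_mul_of_nonneg_left hcc (norm_nonneg _)
  have hFnat : F.natDegree = n := natDegree_eq_of_degree_eq_some hF
  have hPnat : P.natDegree ≤ n := natDegree_le_iff_degree_le.mpr hP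
  have hFne : F ≠ 0 := fun h => by rw [h, degree_zero] at hF; exact absurd hF.symm (by simp)
  have hFcoeff : F.coeff n ≠ 0 := by
    rw [← hFnat]; exact mt leadingCoeff_eq_zero.mp hFne
  have hdisk := disk_ineq n F P hF hP hFzeros hPF
  have hext : ∀ u : ℂ, 1 < ‖u‖ → ‖P.eval u‖ ≤ ‖F.eval u‖ := by
    intro u hu
    have hu0 : u ≠ 0 := by intro h; rw [h, norm_zero] at hu; linarith
    have hz1 : ‖u⁻¹‖ ≤ 1 := by
      rw [norm_inv]; exact inv_le_one_of_one_le₀ hu.le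
    have h := hdisk u⁻¹ hz1
    rw [eval_reflect' n P hPnat u⁻¹ (inv_ne_zero hu0),
      eval_reflect' n F hFnat.le u⁻¹ (inv_ne_zero hu0), inv_inv, norm_mul, norm_mul] at h
    have hpow : 0 < ‖u⁻¹ ^ n‖ := by
      rw [norm_pow]
      exact pow_pos (by simpa [norm_pos_iff] using inv_ne_zero hu0) n
    exact le_of_mul_le_mul_left h hpow
  have hcoeff : ‖P.coeff n‖ ≤ ‖F.coeff n‖ := by
    have h := hdisk 0 (by simp)
    rwa [← coeff_zero_eq_eval_zero, ← coeff_zero_eq_eval_zero, coeff_reflect, coeff_reflect,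
      revAt_le (Nat.zero_le n), Nat.sub_zero] at h
  have main : ∀ z₀ : ℂ, 1 < ‖z₀‖ →
      ‖z₀ * (derivative P).eval z₀ - α * P.eval z₀‖
        ≤ ‖z₀ * (derivative F).eval z₀ - α * F.eval z₀‖ := by
    intro z₀ hz₀
    by_contra hcon
    push_neg at hcon
    set A := z₀ * (derivative P).eval z₀ - α * P.eval z₀ with hAdef
    set B := z₀ * (derivative F).eval z₀ - α * F.eval z₀ with hBdef
    have hB : B ≠ 0 := laguerre F n hn hF hFzeros α hα z₀ hz₀
    have hBpos : 0 < ‖B‖ := by simpa [norm_pos_iff] using hB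
    set lam := A / B with hlamdef
    have hlam : 1 < ‖lam‖ := by
      rw [hlamdef, norm_div, lt_div_iff₀ hBpos, one_mul]
      exact hcon
    set G := P - C lam * F with hGdef
    have hGcoeff : G.coeff n = P.coeff n - lam * F.coeff n := by
      rw [hGdef, coeff_sub, coeff_C_mul]
    have hGcoeff_ne : G.coeff n ≠ 0 := by
      rw [hGcoeff, sub_ne_zero]
      intro h
      have habs : ‖P.coeff n‖ = ‖lam‖ * ‖F.coeff n‖ := by
        rw [h, norm_mul]
      have hFpos : 0 < ‖F.coeff n‖ := by
        simpa [norm_pos_iff] using hFcoeff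
      nlinarith
    have hGdeg_le : G.degree ≤ n := by
      rw [hGdef]
      refine le_trans (degree_sub_le _ _) (max_le (by exact_mod_cast hP) ?_)
      refine le_trans (degree_mul_le _ _) ?_
      calc (C lam).degree + F.degree ≤ 0 + F.degree := add_le_add_left (degree_C_le) _
        _ = (n : WithBot ℕ) := by rw [zero_add, hF]
    have hGdeg : G.degree = n := le_antisymm hGdeg_le (le_degree_of_ne_zero hGcoeff_ne)
    have hGroots : ∀ zz : ℂ, G.eval zz = 0 → ‖zz‖ ≤ 1 := by
      intro zz h0
      by_contra hzz
      push_neg at hzz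
      have hFz : F.eval zz ≠ 0 := fun h => absurd (hFzeros zz h) (not_le.2 hzz)
      have hPval : P.eval zz = lam * F.eval zz := by
        rw [hGdef] at h0
        simp only [eval_sub, eval_mul, eval_C, sub_eq_zero] at h0
        exact h0
      have habs : ‖P.eval zz‖ = ‖lam‖ * ‖F.eval zz‖ := by
        rw [hPval, norm_mul]
      have hle := hext zz hzz
      have hFpos : 0 < ‖F.eval zz‖ := by simpa [norm_pos_iff] using hFz
      nlinarith
    have hG := laguerre G n hn hGdeg hGroots α hα z₀ hz₀
    apply hG
    have hval : z₀ * (derivative G).eval z₀ - α * G.eval z₀ = A - lam * B := by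
      rw [hGdef, hAdef, hBdef]
      simp only [derivative_sub, derivative_C_mul, eval_sub, eval_mul, eval_C]
      ring
    rw [hval, hlamdef, div_mul_cancel₀ A hB, sub_self]
  intro z hz
  rcases eq_or_lt_of_le hz with heq | hlt
  · -- boundary case |z| = 1 via limits
    have htz : Tendsto (fun t : ℝ => ((1 + t : ℝ) : ℂ) * z)
        (nhdsWithin (0:ℝ) (Set.Ioi (0:ℝ))) (nhds z) := by
      have hc : Continuous fun t : ℝ => ((1 + t : ℝ) : ℂ) * z := by continuity
      have h0 := hc.tendsto 0
      simp only [add_zero, Complex.ofReal_one, one_mul] at h0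
      exact h0.mono_left nhdsWithin_le_nhds
    have hgP : Continuous fun u : ℂ =>
        ‖u * (derivative P).eval u - α * P.eval u‖ := by
      exact continuous_norm.comp
        ((continuous_id.mul (derivative P).continuous).sub
          (continuous_const.mul P.continuous))
    have hgF : Continuous fun u : ℂ =>
        ‖u * (derivative F).eval u - α * F.eval u‖ := by
      exact continuous_norm.comp
        ((continuous_id.mul (derivative F).continuous).sub
          (continuous_const.mul F.continuous))
    have h1 := (hgP.tendsto z).comp htz
    have h2 := (hgF.tendsto z).comp htz
    refine le_of_tendsto_of_tendsto h1 h2 ?_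
    filter_upwards [self_mem_nhdsWithin] with t ht
    have ht0 : (0:ℝ) < t := ht
    have habs : 1 < ‖((1 + t : ℝ) : ℂ) * z‖ := by
      rw [norm_mul, Complex.norm_real, Real.norm_eq_abs, ← heq, mul_one, abs_of_pos (by linarith)]
      linarith
    exact main _ habs
  · exact main z hlt
end

section
/- Let P be a polynomial of degree n with complex coefficients having no zeros in the open unit disk |z| < 1, and let Q(z) = z^n·conj(P(1/conj(z))) be its conjugate-reciprocal polynomial. Then for every α ∈ ℂ with Re(α) ≤ n/2 and every z with |z| ≥ 1, |z·P′(z) − α·P(z)| ≤ |z·Q′(z) − α·Q(z)|. -/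
open Polynomial


-- real part of z/(z-w) exceeds 1/2 when |w| ≤ 1 < |z|
lemma aux_re_gt_half {z w : ℂ} (hw : ‖w‖ ≤ 1) (hz : 1 < ‖z‖) :
    (1:ℝ)/2 < (z * (z - w)⁻¹).re := by
  have hzw : z - w ≠ 0 := by
    intro h
    rw [sub_eq_zero] at h
    rw [h] at hz
    exact absurd hw (not_le.mpr hz)
  have hns : 0 < Complex.normSq (z - w) := Complex.normSq_pos.mpr hzw
  have hz2 : 1 < z.re ^ 2 + z.im ^ 2 := by
    have h1 : (1:ℝ) < ‖z‖ ^ 2 := by nlinarith [norm_nonneg z]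
    rwa [Complex.sq_norm, Complex.normSq_apply, ← pow_two, ← pow_two] at h1
  have hw2 : w.re ^ 2 + w.im ^ 2 ≤ 1 := by
    have h1 : ‖w‖ ^ 2 ≤ 1 := by nlinarith [norm_nonneg w]
    rwa [Complex.sq_norm, Complex.normSq_apply, ← pow_two, ← pow_two] at h1
  rw [← div_eq_mul_inv, Complex.div_re, ← add_div, lt_div_iff₀ hns]
  simp only [Complex.normSq_apply, Complex.sub_re, Complex.sub_im]
  nlinarith


lemma aux_eval_deriv_prod (z : ℂ) (s : Multiset ℂ) (h : ∀ w ∈ s, z - w ≠ 0) :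
    eval z (derivative (s.map (fun w => X - C w)).prod) =
      eval z ((s.map (fun w => X - C w)).prod) * (s.map (fun w => (z - w)⁻¹)).sum := by
  induction s using Multiset.induction with
  | empty => simp
  | cons a s ih =>
    have ha : z - a ≠ 0 := h a (Multiset.mem_cons_self a s)
    have hs : ∀ w ∈ s, z - w ≠ 0 := fun w hw => h w (Multiset.mem_cons_of_mem hw)
    simp only [Multiset.map_cons, Multiset.prod_cons, Multiset.sum_cons, derivative_mul,
      derivative_sub, derivative_X, derivative_C, sub_zero, one_mul, eval_add, eval_mul,
      eval_sub, eval_X, eval_C, ih hs]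
    field_simp

lemma aux_half_card_le_sum (s : Multiset ℝ) (h : ∀ x ∈ s, 1/2 < x) :
    (Multiset.card s : ℝ)/2 ≤ s.sum := by
  induction s using Multiset.induction with
  | empty => simp
  | cons a s ih =>
    have ha := h a (Multiset.mem_cons_self a s)
    have := ih (fun x hx => h x (Multiset.mem_cons_of_mem hx))
    simp only [Multiset.card_cons, Multiset.sum_cons]
    push_cast
    linarith

lemma aux_half_card_lt_sum (s : Multiset ℝ) (h : ∀ x ∈ s, 1/2 < x) (hs : s ≠ 0) :
    (Multiset.card s : ℝ)/2 < s.sum := by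
  obtain ⟨a, ha⟩ := Multiset.exists_mem_of_ne_zero hs
  have hrw : a ::ₘ s.erase a = s := Multiset.cons_erase ha
  have h2 := aux_half_card_le_sum (s.erase a) (fun x hx => h x (Multiset.mem_of_mem_erase hx))
  have h3 := h a ha
  rw [← hrw, Multiset.sum_cons, Multiset.card_cons]
  push_cast
  linarith

lemma aux_factor_le {z w : ℂ} (hz : 1 ≤ ‖z‖) (hw : 1 ≤ ‖w‖) :
    ‖z - w‖ ≤ ‖1 - (starRingEnd ℂ) z * w‖ := by
  have hz2 : 1 ≤ z.re ^ 2 + z.im ^ 2 := by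
    have h1 : (1:ℝ) ≤ ‖z‖ ^ 2 := by nlinarith [norm_nonneg z]
    rwa [Complex.sq_norm, Complex.normSq_apply, ← pow_two, ← pow_two] at h1
  have hw2 : 1 ≤ w.re ^ 2 + w.im ^ 2 := by
    have h1 : (1:ℝ) ≤ ‖w‖ ^ 2 := by nlinarith [norm_nonneg w]
    rwa [Complex.sq_norm, Complex.normSq_apply, ← pow_two, ← pow_two] at h1
  rw [Complex.norm_def, Complex.norm_def]
  apply Real.sqrt_le_sqrt
  simp only [Complex.normSq_apply, Complex.sub_re, Complex.sub_im, Complex.mul_re,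
    Complex.mul_im, Complex.conj_re, Complex.conj_im, Complex.one_re, Complex.one_im]
  nlinarith [sq_nonneg (z.re*w.im + z.im*w.re), sq_nonneg (z.re*w.re - z.im*w.im)]

lemma aux_prod_le {s : Multiset ℂ} (f g : ℂ → ℝ) (h : ∀ w ∈ s, 0 ≤ f w ∧ f w ≤ g w) :
    (s.map f).prod ≤ (s.map g).prod := by
  induction s using Multiset.induction with
  | empty => simp
  | cons a s ih =>
    have ha := h a (Multiset.mem_cons_self a s)
    have hs : ∀ w ∈ s, 0 ≤ f w ∧ f w ≤ g w := fun w hw => h w (Multiset.mem_cons_of_mem hw)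
    have h0 : 0 ≤ (s.map f).prod :=
      Multiset.prod_nonneg (by intro x hx; obtain ⟨w, hw, rfl⟩ := Multiset.mem_map.mp hx; exact (hs w hw).1)
    simp only [Multiset.map_cons, Multiset.prod_cons]
    have := ih hs
    nlinarith [ha.1, ha.2]

lemma aux_one_le_prod (s : Multiset ℝ) (h : ∀ x ∈ s, 1 ≤ x) : 1 ≤ s.prod := by
  induction s using Multiset.induction with
  | empty => simp
  | cons a s ih =>
    have ha := h a (Multiset.mem_cons_self a s)
    have := ih (fun x hx => h x (Multiset.mem_cons_of_mem hx))
    simp only [Multiset.prod_cons]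
    nlinarith


lemma aux_reverse_eval (A : Polynomial ℂ) {y : ℂ} (hy : y ≠ 0) :
    eval y A.reverse = y ^ A.natDegree * eval y⁻¹ A := by
  have hyi : y⁻¹ ≠ 0 := inv_ne_zero hy
  letI := invertibleOfNonzero hyi
  have h := eval₂_reverse_mul_pow (RingHom.id ℂ) y⁻¹ A
  rw [invOf_eq_inv, inv_inv] at h
  have h2 : eval y A.reverse * (y⁻¹) ^ A.natDegree = eval y⁻¹ A := by
    exact h
  have hpow : (y : ℂ) ^ A.natDegree ≠ 0 := pow_ne_zero _ hy
  rw [← h2, mul_left_comm, ← mul_pow, mul_inv_cancel₀ hy, one_pow, mul_one]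

lemma aux_conj_eval (P : Polynomial ℂ) (w : ℂ) :
    (starRingEnd ℂ) (eval w P) = eval ((starRingEnd ℂ) w) (P.map (starRingEnd ℂ)) := by
  rw [eval_map]
  have h := hom_eval₂ P (RingHom.id ℂ) (starRingEnd ℂ) w
  simpa using h

lemma aux_laguerre {F : Polynomial ℂ} {n : ℕ} (hn : 1 ≤ n) (hdeg : F.natDegree = n)
    (hF : F ≠ 0) (hroots : ∀ w : ℂ, F.eval w = 0 → ‖w‖ ≤ 1)
    {α : ℂ} (hα : α.re ≤ (n:ℝ)/2) {z : ℂ} (hz : 1 < ‖z‖) :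
    z * eval z (derivative F) - α * eval z F ≠ 0 := by
  have hsplits : Splits F := IsAlgClosed.splits F
  have hcard : Multiset.card F.roots = F.natDegree := splits_iff_card_roots.mp hsplits
  have hfac := C_leadingCoeff_mul_prod_multiset_X_sub_C hcard
  set s := F.roots with hs
  have habs : ∀ w ∈ s, ‖w‖ ≤ 1 := by
    intro w hw
    exact hroots w ((mem_roots hF).mp hw)
  have hmem : ∀ w ∈ s, z - w ≠ 0 := by
    intro w hw
    intro hc
    rw [sub_eq_zero] at hc
    rw [hc] at hz
    exact absurd (habs w hw) (not_le.mpr hz)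
  have hFz : eval z F ≠ 0 := by
    intro h
    exact absurd (hroots z h) (not_le.mpr hz)
  have hd : eval z (derivative F) = eval z F * (s.map (fun w => (z - w)⁻¹)).sum := by
    conv_lhs => rw [← hfac]
    rw [derivative_C_mul, eval_mul, eval_C, aux_eval_deriv_prod z s hmem]
    conv_rhs => rw [← hfac]
    rw [eval_mul, eval_C]
    ring
  intro hcontra
  rw [hd] at hcontra
  have hfact : eval z F * (z * (s.map (fun w => (z - w)⁻¹)).sum - α) = 0 := by
    rw [← hcontra]; ring
  have heq : z * (s.map (fun w => (z - w)⁻¹)).sum = α :=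
    sub_eq_zero.mp ((mul_eq_zero.mp hfact).resolve_left hFz)
  -- now real parts
  have h1 : z * (s.map (fun w => (z - w)⁻¹)).sum = (s.map (fun w => z * (z - w)⁻¹)).sum := by
    rw [Multiset.sum_map_mul_left]
  have h2 : ((s.map (fun w => z * (z - w)⁻¹)).sum).re
      = ((s.map (fun w => z * (z - w)⁻¹)).map Complex.re).sum := by
    exact map_multiset_sum Complex.reAddGroupHom _
  have h3 : (n:ℝ)/2 < ((s.map (fun w => z * (z - w)⁻¹)).map Complex.re).sum := by
    have hcardn : Multiset.card ((s.map (fun w => z * (z - w)⁻¹)).map Complex.re) = n := by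
      simp [Multiset.card_map, hcard, hdeg]
    rw [← hcardn]
    apply aux_half_card_lt_sum
    · intro x hx
      obtain ⟨y, hy, rfl⟩ := Multiset.mem_map.mp hx
      obtain ⟨w, hw, rfl⟩ := Multiset.mem_map.mp hy
      exact aux_re_gt_half (habs w hw) hz
    · intro hc
      rw [hc] at hcardn
      simp at hcardn
      omega
  rw [heq] at h1
  rw [← h2, ← h1] at h3
  linarith

lemma aux_ne_zero_set_infinite : ({x : ℂ | x ≠ 0} : Set ℂ).Infinite := by
  have : ({x : ℂ | x ≠ 0} : Set ℂ) = {(0:ℂ)}ᶜ := by ext x; simp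
  rw [this]
  exact Set.Finite.infinite_compl (Set.finite_singleton 0)

theorem comparison_with_conjugate_reciprocal
    (n : ℕ) (P : Polynomial ℂ) (hP : P.degree = n)
    (hz : ∀ z : ℂ, ‖z‖ < 1 → P.eval z ≠ 0)
    (Q : Polynomial ℂ)
    (hQ : ∀ z : ℂ, z ≠ 0 →
      Q.eval z = z ^ n * (starRingEnd ℂ) (P.eval (1 / (starRingEnd ℂ) z)))
    (α : ℂ) (hα : α.re ≤ (n : ℝ) / 2) :
    ∀ z : ℂ, 1 ≤ ‖z‖ →
      ‖z * (Polynomial.derivative P).eval z - α * P.eval z‖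
        ≤ ‖z * (Polynomial.derivative Q).eval z - α * Q.eval z‖ := by
  intro z hzabs
  by_cases hn0 : n = 0
  · subst hn0
    have hPc : P = C (P.coeff 0) := eq_C_of_degree_le_zero (by rw [hP]; simp)
    have hQc : Q = C ((starRingEnd ℂ) (P.coeff 0)) := by
      apply Polynomial.eq_of_infinite_eval_eq
      apply aux_ne_zero_set_infinite.mono
      intro x hx
      simp only [Set.mem_setOf_eq]
      rw [hQ x hx, hPc]
      simp
    rw [hPc, hQc]
    simp only [derivative_C, eval_zero, mul_zero, eval_C, zero_sub]
    rw [norm_neg, norm_neg, norm_mul, norm_mul, Complex.norm_conj]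
  -- main case
  have hn : 1 ≤ n := Nat.one_le_iff_ne_zero.mpr hn0
  have hP0 : P ≠ 0 := by
    intro h
    rw [h, degree_zero] at hP
    exact absurd hP.symm (by simp)
  have hnd : P.natDegree = n := natDegree_eq_of_degree_eq_some hP
  have hc0 : P.coeff 0 ≠ 0 := by
    rw [coeff_zero_eq_eval_zero]
    exact hz 0 (by simp)
  set A := P.map (starRingEnd ℂ) with hA
  have hAdeg : A.natDegree = n := by rw [hA, natDegree_map, hnd]
  set Qt := A.reverse with hQtdef
  have hQtev : ∀ y : ℂ, y ≠ 0 →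
      eval y Qt = y ^ n * (starRingEnd ℂ) (eval (1 / (starRingEnd ℂ) y) P) := by
    intro y hy
    rw [hQtdef, aux_reverse_eval A hy, hAdeg, aux_conj_eval]
    congr 2
    rw [map_div₀, map_one, Complex.conj_conj, one_div]
  have hQeq : Q = Qt := by
    apply Polynomial.eq_of_infinite_eval_eq
    apply aux_ne_zero_set_infinite.mono
    intro x hx
    simp only [Set.mem_setOf_eq]
    rw [hQ x hx, hQtev x hx]
  -- roots of P
  have hsplits : Splits P := IsAlgClosed.splits P
  have hcardnd : Multiset.card P.roots = P.natDegree := splits_iff_card_roots.mp hsplits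
  have hcard : Multiset.card P.roots = n := by rw [hcardnd, hnd]
  have hfac := C_leadingCoeff_mul_prod_multiset_X_sub_C hcardnd
  have hrabs : ∀ w ∈ P.roots, 1 ≤ ‖w‖ := by
    intro w hw
    by_contra hlt
    exact hz w (not_le.mp hlt) ((mem_roots hP0).mp hw)
  have hevP : ∀ v : ℂ, ‖eval v P‖
      = ‖P.leadingCoeff‖ * (P.roots.map (fun w => ‖v - w‖)).prod := by
    intro v
    conv_lhs => rw [← hfac]
    rw [eval_mul, eval_C, norm_mul, eval_multiset_prod, (map_multiset_prod (normHom : ℂ →*₀ ℝ) _ : ‖Multiset.prod _‖ = _),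
      Multiset.map_map, Multiset.map_map]
    congr 2
    exact Multiset.map_congr rfl (fun w _ => by simp)
  have key1 : ∀ y : ℂ, 1 ≤ ‖y‖ →
      ‖eval y P‖ ≤ ‖eval y Qt‖ := by
    intro y hy
    have hy0 : y ≠ 0 := by
      intro h; rw [h] at hy; simp at hy; linarith
    have hcy : (starRingEnd ℂ) y ≠ 0 := by simpa using hy0
    have habsQt : ‖eval y Qt‖
        = ‖P.leadingCoeff‖ *
          (P.roots.map (fun w => ‖1 - (starRingEnd ℂ) y * w‖)).prod := by
      rw [hQtev y hy0, norm_mul, norm_pow, Complex.norm_conj, hevP (1 / (starRingEnd ℂ) y)]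
      rw [← mul_assoc, mul_comm (‖y‖ ^ n), mul_assoc]
      congr 1
      have hpow : ‖y‖ ^ n = (P.roots.map (fun _ => ‖y‖)).prod := by
        rw [Multiset.map_const', Multiset.prod_replicate, hcard]
      rw [hpow, ← Multiset.prod_map_mul]
      refine congrArg Multiset.prod (Multiset.map_congr rfl fun w _ => ?_)
      rw [← Complex.norm_conj y, ← norm_mul]
      congr 1
      field_simp
    rw [hevP y, habsQt]
    apply mul_le_mul_of_nonneg_left _ (norm_nonneg _)
    apply aux_prod_le
    intro w hw
    exact ⟨norm_nonneg _, aux_factor_le hy (hrabs w hw)⟩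
  have keyc : ‖P.leadingCoeff‖ ≤ ‖P.coeff 0‖ := by
    have h0 : ‖P.coeff 0‖
        = ‖P.leadingCoeff‖ * (P.roots.map (fun w => ‖0 - w‖)).prod := by
      rw [coeff_zero_eq_eval_zero]; exact hevP 0
    have h1 : 1 ≤ (P.roots.map (fun w => ‖0 - w‖)).prod := by
      apply aux_one_le_prod
      intro x hx
      obtain ⟨w, hw, rfl⟩ := Multiset.mem_map.mp hx
      simpa using hrabs w hw
    nlinarith [norm_nonneg P.leadingCoeff]
  have hQt0 : ∀ y : ℂ, 1 < ‖y‖ → eval y Qt ≠ 0 := by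
    intro y hy
    have hy0 : y ≠ 0 := by
      intro h; rw [h] at hy; simp at hy; linarith
    rw [hQtev y hy0]
    apply mul_ne_zero (pow_ne_zero _ hy0)
    have hlt : ‖1 / (starRingEnd ℂ) y‖ < 1 := by
      rw [norm_div, norm_one, Complex.norm_conj, div_lt_one (by linarith)]
      linarith
    intro h
    exact hz _ hlt (by simpa using congrArg (starRingEnd ℂ) h)
  have hQtcn : Qt.coeff n = (starRingEnd ℂ) (P.coeff 0) := by
    rw [hQtdef, coeff_reverse, revAt_le hAdeg.ge, hAdeg, Nat.sub_self, hA, coeff_map]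
  have hQtcn0 : Qt.coeff n ≠ 0 := by rw [hQtcn]; simpa using hc0
  have hQtdeg : Qt.natDegree = n := by
    apply le_antisymm
    · exact le_trans (reverse_natDegree_le A) hAdeg.le
    · exact le_natDegree_of_ne_zero hQtcn0
  have hQtne : Qt ≠ 0 := by
    intro h; exact hQtcn0 (by rw [h, coeff_zero])
  have hQtroots : ∀ w : ℂ, eval w Qt = 0 → ‖w‖ ≤ 1 := by
    intro w hw
    by_contra hgt
    exact hQt0 w (not_le.mp hgt) hw
  have main : ∀ y : ℂ, 1 < ‖y‖ →
      ‖y * eval y (derivative P) - α * eval y P‖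
        ≤ ‖y * eval y (derivative Qt) - α * eval y Qt‖ := by
    intro y hy
    by_contra hcon
    push_neg at hcon
    have hS : y * eval y (derivative Qt) - α * eval y Qt ≠ 0 :=
      aux_laguerre hn hQtdeg hQtne hQtroots hα hy
    have hSpos : 0 < ‖y * eval y (derivative Qt) - α * eval y Qt‖ :=
      norm_pos_iff.mpr hS
    set lam := (y * eval y (derivative P) - α * eval y P) /
      (y * eval y (derivative Qt) - α * eval y Qt) with hlamdef
    have hlam : 1 < ‖lam‖ := by
      rw [hlamdef, norm_div]
      exact (one_lt_div hSpos).mpr hcon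
    set F := P - C lam * Qt with hFdef
    have hFcn : F.coeff n ≠ 0 := by
      rw [hFdef, coeff_sub, coeff_C_mul, hQtcn]
      intro h
      rw [sub_eq_zero] at h
      have h2 : ‖P.coeff n‖ = ‖lam‖ * ‖P.coeff 0‖ := by
        rw [h, norm_mul, Complex.norm_conj]
      have h3 : ‖P.coeff n‖ ≤ ‖P.coeff 0‖ := by
        rw [← hnd, ← leadingCoeff]
        exact keyc
      have h4 : 0 < ‖P.coeff 0‖ := by
        simpa using norm_pos_iff.mpr hc0
      nlinarith
    have hFdeg : F.natDegree = n := by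
      apply le_antisymm
      · apply le_trans (natDegree_sub_le _ _)
        simp only [max_le_iff]
        refine ⟨hnd.le, le_trans (natDegree_C_mul_le _ _) hQtdeg.le⟩
      · exact le_natDegree_of_ne_zero hFcn
    have hFne : F ≠ 0 := by
      intro h; exact hFcn (by rw [h, coeff_zero])
    have hFroots : ∀ w : ℂ, eval w F = 0 → ‖w‖ ≤ 1 := by
      intro w hw
      by_contra hgt
      push_neg at hgt
      rw [hFdef, eval_sub, eval_mul, eval_C, sub_eq_zero] at hw
      have hQw : eval w Qt ≠ 0 := hQt0 w hgt
      have h1 : ‖eval w P‖ ≤ ‖eval w Qt‖ := key1 w hgt.le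
      rw [hw, norm_mul] at h1
      have h2 := norm_pos_iff.mpr hQw
      nlinarith
    have hL := aux_laguerre hn hFdeg hFne hFroots hα hy
    apply hL
    rw [hFdef, derivative_sub, derivative_C_mul, eval_sub, eval_mul, eval_sub, eval_mul, eval_C]
    have hring : y * (eval y (derivative P) - lam * eval y (derivative Qt)) -
        α * (eval y P - lam * eval y Qt)
        = (y * eval y (derivative P) - α * eval y P) -
          lam * (y * eval y (derivative Qt) - α * eval y Qt) := by ring
    rw [hring, hlamdef, div_mul_cancel₀ _ hS, sub_self]
  rw [hQeq]
  rcases lt_or_eq_of_le hzabs with h1 | h1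
  · exact main z h1
  · have hc : Continuous (fun t : ℝ => ((t:ℝ):ℂ)*z) :=
      Complex.continuous_ofReal.mul continuous_const
    have hcont : Continuous (fun t : ℝ =>
        ‖((t:ℝ):ℂ)*z * eval (((t:ℝ):ℂ)*z) (derivative Qt) - α * eval (((t:ℝ):ℂ)*z) Qt‖ -
        ‖((t:ℝ):ℂ)*z * eval (((t:ℝ):ℂ)*z) (derivative P) - α * eval (((t:ℝ):ℂ)*z) P‖) := by
      apply Continuous.sub
      · exact continuous_norm.comp ((hc.mul (((derivative Qt).continuous).comp hc)).sub
          (continuous_const.mul ((Qt.continuous).comp hc)))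
      · exact continuous_norm.comp ((hc.mul (((derivative P).continuous).comp hc)).sub
          (continuous_const.mul ((P.continuous).comp hc)))
    have h0 : (0:ℝ) ≤
        ‖((1:ℝ):ℂ)*z * eval (((1:ℝ):ℂ)*z) (derivative Qt) - α * eval (((1:ℝ):ℂ)*z) Qt‖ -
        ‖((1:ℝ):ℂ)*z * eval (((1:ℝ):ℂ)*z) (derivative P) - α * eval (((1:ℝ):ℂ)*z) P‖ := by
      apply ge_of_tendsto (x := nhdsWithin 1 (Set.Ioi (1:ℝ)))
        ((hcont.tendsto 1).mono_left nhdsWithin_le_nhds)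
      filter_upwards [self_mem_nhdsWithin] with t ht
      have ht1 : (1:ℝ) < t := ht
      have habs : 1 < ‖((t:ℝ):ℂ)*z‖ := by
        rw [norm_mul, ← h1, mul_one, Complex.norm_real, Real.norm_eq_abs, abs_of_pos (by linarith)]
        exact ht1
      exact sub_nonneg.mpr (main _ habs)
    have h2 : ((1:ℝ):ℂ) * z = z := by norm_num
    rw [h2] at h0
    linarith
end
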